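/- arXiv:1106.2331 — 5 statements merged into one kernel-verified Lean document; each statement's English description precedes it below -/
import Mathlib

section
/- Let Γ be a finite simple graph and G = G(Γ) the associated partially commutative group. Then Conj_N(G), the subgroup of normal conjugating automorphisms, is a normal subgroup of St^conj(K): if φ ∈ Conj_N(G) and ψ ∈ St^conj(K) then ψ⁻¹φψ ∈ Conj_N(G). -/
namespace PCG

variable {X : Type*}

/-- The orthogonal complement of a set of vertices: all vertices at distance at
most one from every element of `Y`. -/
def perp (Γ : SimpleGraph X) (Y : Set X) : Set X :=
  {u | ∀ y ∈ Y, u = y ∨ Γ.Adj u y}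

/-- The closure operator `cl(Y) = Y^⊥⊥`. -/
def cl (Γ : SimpleGraph X) (Y : Set X) : Set X :=
  perp Γ (perp Γ Y)

/-- The admissible-set operator `𝔞(Y) = ⋂_{y ∈ Y} (y^⊥ \ {y})^⊥` (with `𝔞(∅) = X`). -/
def aSet (Γ : SimpleGraph X) (Y : Set X) : Set X :=
  ⋂ y ∈ Y, perp Γ (perp Γ {y} \ {y})

/-- A set is admissible if it is `𝔞(Y)` for some `Y`. -/
def IsAdmissible (Γ : SimpleGraph X) (A : Set X) : Prop :=
  ∃ Y : Set X, A = aSet Γ Y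

/-- A set is closed if it equals its closure. -/
def IsClosedSet (Γ : SimpleGraph X) (Y : Set X) : Prop :=
  Y = cl Γ Y

/-- `x` dominates `y` if `x^⊥ ∩ y^⊥ = y^⊥ \ {y}`. -/
def Dominates (Γ : SimpleGraph X) (x y : X) : Prop :=
  perp Γ {x} ∩ perp Γ {y} = perp Γ {y} \ {y}

/-- The set of dominated vertices. -/
def Dom (Γ : SimpleGraph X) : Set X :=
  {y | ∃ x, Dominates Γ x y}

/-- The `∼⊥`-equivalence class of `x`: vertices with the same star as `x`. -/
def perpClass (Γ : SimpleGraph X) (x : X) : Set X :=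
  {y | perp Γ {y} = perp Γ {x}}

/-- The `∼◇`-equivalence class of `x`: vertices with the same link as `x`. -/
def diaClass (Γ : SimpleGraph X) (x : X) : Set X :=
  {y | perp Γ {y} \ {y} = perp Γ {x} \ {x}}

/-- The `∼`-equivalence class `[x]`. -/
def simClass (Γ : SimpleGraph X) (x : X) : Set X :=
  perpClass Γ x ∪ diaClass Γ x

/-- The outer admissible set of `y`. -/
def out (Γ : SimpleGraph X) (y : X) : Set X :=
  {x | Dominates Γ x y ∧ simClass Γ x ≠ simClass Γ y}

/-- `C` is the vertex set of a connected component of the full subgraph of `Γ` on `S`. -/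
def IsCompOf (Γ : SimpleGraph X) (S : Set X) (C : Set X) : Prop :=
  ∃ K : (Γ.induce S).ConnectedComponent, C = Subtype.val '' K.supp

/-- Balanced graphs. -/
def Balanced (Γ : SimpleGraph X) : Prop :=
  ∀ v ∈ Dom Γ, out Γ v = ∅ ∨ ∃ C : Set X, IsCompOf Γ ((perp Γ {v})ᶜ) C ∧ out Γ v ⊆ C

/-- Relators of the partially commutative group: commutators of adjacent vertices. -/
def raagRels (Γ : SimpleGraph X) : Set (FreeGroup X) :=
  {w | ∃ x y : X, Γ.Adj x y ∧
    w = FreeGroup.of x * FreeGroup.of y * (FreeGroup.of x)⁻¹ * (FreeGroup.of y)⁻¹}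

/-- The partially commutative group (right-angled Artin group) of `Γ`. -/
abbrev RAAG (Γ : SimpleGraph X) : Type _ := PresentedGroup (raagRels Γ)

/-- The generator of `RAAG Γ` corresponding to a vertex. -/
def gen (Γ : SimpleGraph X) (x : X) : RAAG Γ := PresentedGroup.of x

/-- The canonical parabolic subgroup generated by a set of vertices. -/
def parab (Γ : SimpleGraph X) (Y : Set X) : Subgroup (RAAG Γ) :=
  Subgroup.closure (gen Γ '' Y)

/-- Conjugate of a subgroup: `H^f = f⁻¹ H f`. -/
def conjBy {G : Type*} [Group G] (H : Subgroup G) (f : G) : Subgroup G :=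
  Subgroup.map (MulAut.conj f⁻¹).toMonoidHom H

/-- Inversions. -/
def InvSet (Γ : SimpleGraph X) : Set (MulAut (RAAG Γ)) :=
  {φ | ∃ x : X, φ (gen Γ x) = (gen Γ x)⁻¹ ∧ ∀ y : X, y ≠ x → φ (gen Γ y) = gen Γ y}

/-- Transvections. -/
def TrSet (Γ : SimpleGraph X) : Set (MulAut (RAAG Γ)) :=
  {φ | ∃ x y : X, y ≠ x ∧
    (φ (gen Γ x) = gen Γ x * gen Γ y ∨ φ (gen Γ x) = (gen Γ y)⁻¹ * gen Γ x) ∧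
    ∀ z : X, z ≠ x → φ (gen Γ z) = gen Γ z}

/-- Elementary conjugating automorphisms. -/
def LInnSet (Γ : SimpleGraph X) : Set (MulAut (RAAG Γ)) :=
  {φ | ∃ (x : X) (C : Set X) (ε : ℤ), (ε = 1 ∨ ε = -1) ∧
    IsCompOf Γ ((perp Γ {x})ᶜ) C ∧
    (∀ u ∈ C, φ (gen Γ u) = (gen Γ x ^ ε)⁻¹ * gen Γ u * gen Γ x ^ ε) ∧
    (∀ u : X, u ∉ C → φ (gen Γ u) = gen Γ u)}

/-- The subgroup `Aut*(G)` generated by inversions, transvections and elementary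
conjugating automorphisms. -/
def AutStar (Γ : SimpleGraph X) : Subgroup (MulAut (RAAG Γ)) :=
  Subgroup.closure (InvSet Γ ∪ TrSet Γ ∪ LInnSet Γ)

/-- Basis-conjugating automorphisms. -/
def IsBasisConj (Γ : SimpleGraph X) (φ : MulAut (RAAG Γ)) : Prop :=
  ∀ x : X, ∃ g : RAAG Γ, φ (gen Γ x) = g⁻¹ * gen Γ x * g

/-- Normal conjugating automorphisms. -/
def IsConjN (Γ : SimpleGraph X) (φ : MulAut (RAAG Γ)) : Prop :=
  IsBasisConj Γ φ ∧
    ∀ x : X, ∃ f : RAAG Γ, ∀ z ∈ aSet Γ {x}, φ (gen Γ z) = f⁻¹ * gen Γ z * f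

/-- Vertex conjugating automorphisms. -/
def IsConjV (Γ : SimpleGraph X) (φ : MulAut (RAAG Γ)) : Prop :=
  IsBasisConj Γ φ ∧
    ∀ x : X, ∃ f : RAAG Γ, ∀ y ∈ simClass Γ x, φ (gen Γ y) = f⁻¹ * gen Γ y * f

/-- Membership in `St(K)`. -/
def IsStK (Γ : SimpleGraph X) (φ : MulAut (RAAG Γ)) : Prop :=
  ∀ A : Set X, IsAdmissible Γ A →
    Subgroup.map φ.toMonoidHom (parab Γ A) = parab Γ A

/-- Membership in `St(L)`. -/
def IsStL (Γ : SimpleGraph X) (φ : MulAut (RAAG Γ)) : Prop :=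
  ∀ A : Set X, IsClosedSet Γ A →
    Subgroup.map φ.toMonoidHom (parab Γ A) = parab Γ A

/-- Membership in `St^conj(K)`. -/
def IsStConjK (Γ : SimpleGraph X) (φ : MulAut (RAAG Γ)) : Prop :=
  ∀ A : Set X, IsAdmissible Γ A →
    ∃ f : RAAG Γ, Subgroup.map φ.toMonoidHom (parab Γ A) = conjBy (parab Γ A) f

/-- Aggregate conjugating automorphisms. -/
def AggrSet (Γ : SimpleGraph X) : Set (MulAut (RAAG Γ)) :=
  {φ | ∃ (x : X) (C : Set X), IsCompOf Γ ({x}ᶜ) C ∧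
    (∀ y ∈ C, φ (gen Γ y) = (gen Γ x)⁻¹ * gen Γ y * gen Γ x) ∧
    (∀ y : X, y ∉ C → φ (gen Γ y) = gen Γ y)}

/-- Elementary singular conjugating automorphisms: those `α_{C,x^ε}` with `C` a singleton. -/
def LInnSSet (Γ : SimpleGraph X) : Set (MulAut (RAAG Γ)) :=
  {φ | ∃ (x y : X) (ε : ℤ), (ε = 1 ∨ ε = -1) ∧
    IsCompOf Γ ((perp Γ {x})ᶜ) {y} ∧
    φ (gen Γ y) = (gen Γ x ^ ε)⁻¹ * gen Γ y * gen Γ x ^ ε ∧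
    ∀ u : X, u ≠ y → φ (gen Γ u) = gen Γ u}

/-- Basic collected conjugating automorphisms. -/
def LInnCSet (Γ : SimpleGraph X) : Set (MulAut (RAAG Γ)) :=
  {φ | ∃ x u : X, Dominates Γ x u ∧
    (∀ v ∈ simClass Γ u \ {x}, φ (gen Γ v) = (gen Γ x)⁻¹ * gen Γ v * gen Γ x) ∧
    (∀ v : X, v ∉ simClass Γ u \ {x} → φ (gen Γ v) = gen Γ v)}

/-- Regular elementary conjugating automorphisms. -/
def LInnRSet (Γ : SimpleGraph X) : Set (MulAut (RAAG Γ)) :=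
  (LInnSet Γ ∩ {φ | IsConjV Γ φ}) \ LInnSSet Γ

/-- Basic vertex conjugating automorphisms. -/
def LInnVSet (Γ : SimpleGraph X) : Set (MulAut (RAAG Γ)) :=
  LInnRSet Γ ∪ LInnCSet Γ

/-- Tame extended elementary conjugating automorphisms. -/
def LInnTSet (Γ : SimpleGraph X) : Set (MulAut (RAAG Γ)) :=
  {φ | ∃ (y : X) (L : Set X) (ε : ℤ), (ε = 1 ∨ ε = -1) ∧
    (∀ v ∈ L, ∃ C : Set X, IsCompOf Γ ((perp Γ {y})ᶜ) C ∧ v ∈ C ∧ C ⊆ L) ∧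
    aSet Γ {y} ∩ L = ∅ ∧
    (∀ u ∈ L, φ (gen Γ u) = (gen Γ y ^ ε)⁻¹ * gen Γ u * gen Γ y ^ ε) ∧
    (∀ u : X, u ∉ L → φ (gen Γ u) = gen Γ u)}

/-- `K`-minimal vertices. -/
def KMin (Γ : SimpleGraph X) (x : X) : Prop :=
  ∀ y : X, aSet Γ {y} ⊆ aSet Γ {x} → aSet Γ {y} = aSet Γ {x}

/-- `L`-minimal vertices. -/
def LMin (Γ : SimpleGraph X) (x : X) : Prop :=
  ∀ y : X, cl Γ {y} ⊆ cl Γ {x} → cl Γ {y} = cl Γ {x}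

end PCG

namespace PCG

lemma mem_aSet_self {X : Type*} (Γ : SimpleGraph X) (x : X) : x ∈ aSet Γ {x} := by
  simp only [aSet, Set.mem_iInter, Set.mem_singleton_iff]
  rintro y rfl
  intro u hu
  obtain ⟨h1, h2⟩ := hu
  simp only [perp, Set.mem_setOf_eq, Set.mem_singleton_iff] at h1 h2
  rcases h1 y rfl with h | h
  · exact absurd h h2
  · exact Or.inr h.symm

lemma map_eq_conj_of_forall_gen {G : Type*} [Group G] (φ : MulAut G) (S : Set G) (g : G)
    (h : ∀ s ∈ S, φ s = g⁻¹ * s * g) :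
    ∀ w ∈ Subgroup.closure S, φ w = g⁻¹ * w * g := by
  intro w hw
  induction hw using Subgroup.closure_induction with
  | mem s hs => exact h s hs
  | one => simp
  | mul a b _ _ ha hb => rw [map_mul, ha, hb]; group
  | inv a _ ha => rw [map_inv, ha]; group

/-- `Conj_N(G)` is a normal subgroup of `St^conj(K)`. -/
theorem conjN_normal_in_stConjK {X : Type*} [Fintype X] (Γ : SimpleGraph X)
    (φ ψ : MulAut (RAAG Γ)) (hφ : IsConjN Γ φ) (hψ : IsStConjK Γ ψ) :
    IsConjN Γ (ψ⁻¹ * φ * ψ) := by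
  have key : ∀ x : X, ∃ F : RAAG Γ, ∀ z ∈ aSet Γ {x},
      (ψ⁻¹ * φ * ψ) (gen Γ z) = F⁻¹ * gen Γ z * F := by
    intro x
    obtain ⟨g, hg⟩ := hφ.2 x
    obtain ⟨f, hf⟩ := hψ (aSet Γ {x}) ⟨{x}, rfl⟩
    refine ⟨ψ⁻¹ (f⁻¹ * g * φ f), ?_⟩
    intro z hz
    have hgen : gen Γ z ∈ parab Γ (aSet Γ {x}) :=
      Subgroup.subset_closure ⟨z, hz, rfl⟩
    have hmem : ψ (gen Γ z) ∈ conjBy (parab Γ (aSet Γ {x})) f := by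
      rw [← hf]
      exact ⟨gen Γ z, hgen, rfl⟩
    obtain ⟨w, hw, hwe⟩ := hmem
    have hwe' : ψ (gen Γ z) = f⁻¹ * w * f := by
      rw [← hwe]
      simp [MulAut.conj_apply]
    have hφw : φ w = g⁻¹ * w * g := by
      refine map_eq_conj_of_forall_gen φ _ g ?_ w hw
      rintro s ⟨u, hu, rfl⟩
      exact hg u hu
    simp only [MulAut.mul_apply, MulAut.inv_def]
    rw [hwe']
    rw [show gen Γ z = ψ.symm (f⁻¹ * w * f) from by
      rw [← hwe']; exact (ψ.symm_apply_apply _).symm]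
    rw [← map_inv ψ.symm, ← map_mul, ← map_mul]
    refine congrArg ψ.symm ?_
    rw [map_mul, map_mul, map_inv, hφw]
    group
  refine ⟨fun x => ?_, fun x => key x⟩
  obtain ⟨F, hF⟩ := key x
  exact ⟨F, hF x (mem_aSet_self Γ x)⟩

end PCG
end

section
/- Let Γ be a finite simple graph, G = G(Γ), and let Aut*(G) be the subgroup of Aut(G) generated by Inv ∪ Tr ∪ LInn. If φ ∈ Aut*(G), then for every x ∈ X there exists f_x ∈ G such that φ(G(𝔞(x))) = G(𝔞(x))^{f_x}. -/
namespace PCG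

variable {X : Type*}

section GroupFacts

variable {G : Type*} [Group G]

lemma mem_conjBy {H : Subgroup G} {f g : G} : g ∈ conjBy H f ↔ f * g * f⁻¹ ∈ H := by
  simp only [conjBy, Subgroup.mem_map, MulEquiv.coe_toMonoidHom, MulAut.conj_apply, inv_inv]
  constructor
  · rintro ⟨h, hh, rfl⟩
    have : f * (f⁻¹ * h * f) * f⁻¹ = h := by group
    rwa [this]
  · intro hg
    exact ⟨f * g * f⁻¹, hg, by group⟩

lemma conjBy_conjBy (H : Subgroup G) (a b : G) :
    conjBy (conjBy H a) b = conjBy H (a * b) := by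
  ext g
  simp only [mem_conjBy]
  constructor
  · intro h
    have : a * b * g * (a * b)⁻¹ = a * (b * g * b⁻¹) * a⁻¹ := by group
    rwa [this]
  · intro h
    have : a * (b * g * b⁻¹) * a⁻¹ = a * b * g * (a * b)⁻¹ := by group
    rwa [this]

lemma conjBy_one (H : Subgroup G) : conjBy H 1 = H := by
  ext g; simp [mem_conjBy]

lemma map_conjBy (φ : MulAut G) (H : Subgroup G) (f : G) :
    Subgroup.map φ.toMonoidHom (conjBy H f) =
      conjBy (Subgroup.map φ.toMonoidHom H) (φ f) := by
  ext g
  simp only [mem_conjBy, Subgroup.mem_map, MulEquiv.coe_toMonoidHom]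
  constructor
  · rintro ⟨k, hk, rfl⟩
    exact ⟨f * k * f⁻¹, hk, by simp [map_mul, map_inv]⟩
  · rintro ⟨h, hh, heq⟩
    have hk : f * (f⁻¹ * h * f) * f⁻¹ = h := by group
    refine ⟨f⁻¹ * h * f, ?_, ?_⟩
    · rw [hk]; exact hh
    · have : φ (f⁻¹ * h * f) = (φ f)⁻¹ * φ h * φ f := by simp [map_mul, map_inv]
      rw [this, heq]; group

lemma map_mulAut_mul (φ ψ : MulAut G) (H : Subgroup G) :
    Subgroup.map (φ * ψ).toMonoidHom H =
      Subgroup.map φ.toMonoidHom (Subgroup.map ψ.toMonoidHom H) := by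
  rw [Subgroup.map_map]
  rfl

lemma map_mulAut_inv_map (φ : MulAut G) (H : Subgroup G) :
    Subgroup.map φ⁻¹.toMonoidHom (Subgroup.map φ.toMonoidHom H) = H := by
  rw [Subgroup.map_map]
  have : (φ⁻¹.toMonoidHom.comp φ.toMonoidHom) = MonoidHom.id G := by
    ext g
    simp
  rw [this, Subgroup.map_id]

end GroupFacts

section RAAGFacts

variable (Γ : SimpleGraph X)

lemma gen_mem_parab {A : Set X} {u : X} (hu : u ∈ A) : gen Γ u ∈ parab Γ A :=
  Subgroup.subset_closure ⟨u, hu, rfl⟩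

lemma adj_commute {a b : X} (h : Γ.Adj a b) : Commute (gen Γ a) (gen Γ b) := by
  have hrel : (FreeGroup.of a * FreeGroup.of b * (FreeGroup.of a)⁻¹ * (FreeGroup.of b)⁻¹)
      ∈ raagRels Γ := ⟨a, b, h, rfl⟩
  have h1 : (PresentedGroup.mk (raagRels Γ))
      (FreeGroup.of a * FreeGroup.of b * (FreeGroup.of a)⁻¹ * (FreeGroup.of b)⁻¹) = 1 := by
    have hm := Subgroup.subset_normalClosure hrel
    exact (QuotientGroup.eq_one_iff _).mpr hm
  rw [map_mul, map_mul, map_inv, map_inv] at h1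
  have h2 : gen Γ a * gen Γ b * (gen Γ a)⁻¹ * (gen Γ b)⁻¹ = 1 := h1
  exact commutatorElement_eq_one_iff_commute.mp (by rw [commutatorElement_def]; exact h2)

lemma commute_gen {a b : X} (h : Commute (gen Γ a) (gen Γ b)) : a = b ∨ Γ.Adj a b := by
  letI : DecidableEq X := Classical.decEq X
  by_contra hc
  push_neg at hc
  obtain ⟨hne, hnadj⟩ := hc
  set f : X → Equiv.Perm (Fin 3) := fun v =>
    if v = a then Equiv.swap 0 1 else if v = b then Equiv.swap 1 2 else 1 with hf
  have key : ∀ w, w ≠ a → w ≠ b → f w = 1 := fun w hwa hwb => by simp [hf, hwa, hwb]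
  have fa : f a = Equiv.swap 0 1 := by simp [hf]
  have fb : f b = Equiv.swap 1 2 := by simp [hf, hne.symm, Ne.symm hne]
  have hrels : ∀ r ∈ raagRels Γ, FreeGroup.lift f r = 1 := by
    rintro r ⟨u, v, huv, rfl⟩
    have hcomm : Commute (f u) (f v) := by
      by_cases h1 : u = a
      · by_cases h3 : v = a
        · rw [h1, h3] at huv; exact absurd huv (Γ.loopless.irrefl _)
        by_cases h4 : v = b
        · rw [h1, h4] at huv; exact absurd huv hnadj
        · rw [key v h3 h4]; exact Commute.one_right _
      by_cases h2 : u = b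
      · by_cases h3 : v = a
        · rw [h2, h3] at huv; exact absurd huv.symm hnadj
        by_cases h4 : v = b
        · rw [h2, h4] at huv; exact absurd huv (Γ.loopless.irrefl _)
        · rw [key v h3 h4]; exact Commute.one_right _
      · rw [key u h1 h2]; exact Commute.one_left _
    simp only [map_mul, map_inv, FreeGroup.lift_apply_of]
    rw [← commutatorElement_def]
    exact commutatorElement_eq_one_iff_commute.mpr hcomm
  have hF : Commute ((PresentedGroup.toGroup hrels) (gen Γ a))
      ((PresentedGroup.toGroup hrels) (gen Γ b)) := h.map _
  rw [show gen Γ a = PresentedGroup.of a from rfl, show gen Γ b = PresentedGroup.of b from rfl,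
    PresentedGroup.toGroup.of, PresentedGroup.toGroup.of, fa, fb] at hF
  have h0 := congrArg (fun p : Equiv.Perm (Fin 3) => p 0) hF.eq
  simp only [Equiv.Perm.mul_apply] at h0
  have e1 : (Equiv.swap 1 2 : Equiv.Perm (Fin 3)) 0 = 0 := by decide
  have e2 : (Equiv.swap 0 1 : Equiv.Perm (Fin 3)) 0 = 1 := by decide
  have e3 : (Equiv.swap 1 2 : Equiv.Perm (Fin 3)) 1 = 2 := by decide
  rw [e1, e2, e3] at h0
  exact absurd h0 (by decide)

lemma map_parab_of_eqOn (φ : MulAut (RAAG Γ)) (ψ : RAAG Γ →* RAAG Γ) (A : Set X)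
    (h : ∀ u ∈ A, φ (gen Γ u) = ψ (gen Γ u)) :
    Subgroup.map φ.toMonoidHom (parab Γ A) = Subgroup.map ψ (parab Γ A) := by
  show Subgroup.map _ (Subgroup.closure _) = Subgroup.map _ (Subgroup.closure _)
  rw [MonoidHom.map_closure, MonoidHom.map_closure]
  congr 1
  rw [← Set.image_comp, ← Set.image_comp]
  exact Set.image_congr fun u hu => h u hu

lemma map_parab_conj (φ : MulAut (RAAG Γ)) (A : Set X) (f : RAAG Γ)
    (h : ∀ u ∈ A, φ (gen Γ u) = f⁻¹ * gen Γ u * f) :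
    Subgroup.map φ.toMonoidHom (parab Γ A) = conjBy (parab Γ A) f := by
  have := map_parab_of_eqOn Γ φ (MulAut.conj f⁻¹).toMonoidHom A
    (fun u hu => by simp only [MulEquiv.coe_toMonoidHom, MulAut.conj_apply, inv_inv]; exact h u hu)
  rw [this]
  rfl

lemma map_parab_self (φ : MulAut (RAAG Γ)) (A : Set X)
    (h1 : ∀ u ∈ A, φ (gen Γ u) ∈ parab Γ A)
    (h2 : ∀ u ∈ A, ∃ g ∈ parab Γ A, φ g = gen Γ u) :
    Subgroup.map φ.toMonoidHom (parab Γ A) = parab Γ A := by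
  apply le_antisymm
  · rw [show parab Γ A = Subgroup.closure (gen Γ '' A) from rfl, MonoidHom.map_closure]
    refine (Subgroup.closure_le _).mpr ?_
    rintro g ⟨_, ⟨u, hu, rfl⟩, rfl⟩
    exact h1 u hu
  · refine (Subgroup.closure_le _).mpr ?_
    rintro g ⟨u, hu, rfl⟩
    obtain ⟨w, hw, hwe⟩ := h2 u hu
    exact ⟨w, hw, hwe⟩

end RAAGFacts

section Combinatorics

variable (Γ : SimpleGraph X)

lemma mem_perp_singleton {x u : X} : u ∈ perp Γ {x} ↔ u = x ∨ Γ.Adj u x := by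
  simp [perp]

lemma mem_aSet_singleton {z u : X} :
    u ∈ aSet Γ {z} ↔ ∀ w, Γ.Adj w z → u = w ∨ Γ.Adj u w := by
  have : aSet Γ {z} = perp Γ (perp Γ {z} \ {z}) := by simp [aSet]
  rw [this]
  simp only [perp, Set.mem_setOf_eq, Set.mem_diff, Set.mem_singleton_iff]
  constructor
  · intro h w hw
    exact h w ⟨fun y hy => by rw [hy]; exact Or.inr hw, hw.ne⟩
  · rintro h w ⟨hw1, hne⟩
    rcases hw1 z rfl with rfl | hadj
    · exact absurd rfl hne
    · exact h w hadj

lemma tr_dom {φ : MulAut (RAAG Γ)} {x y : X} (_hyx : y ≠ x)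
    (hx : φ (gen Γ x) = gen Γ x * gen Γ y ∨ φ (gen Γ x) = (gen Γ y)⁻¹ * gen Γ x)
    (hfix : ∀ z, z ≠ x → φ (gen Γ z) = gen Γ z)
    {u : X} (hu : Γ.Adj u x) : u = y ∨ Γ.Adj u y := by
  have hux : u ≠ x := hu.ne
  have hc : Commute (gen Γ u) (gen Γ x) := adj_commute Γ hu
  have hc2 : Commute (gen Γ u) (φ (gen Γ x)) := by
    have := hc.map φ.toMonoidHom
    simp only [MulEquiv.coe_toMonoidHom] at this
    rwa [hfix u hux] at this
  have hcy : Commute (gen Γ u) (gen Γ y) := by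
    rcases hx with h | h
    · rw [h] at hc2
      have h3 : Commute (gen Γ u) ((gen Γ x)⁻¹ * (gen Γ x * gen Γ y)) :=
        hc.inv_right.mul_right hc2
      rwa [inv_mul_cancel_left] at h3
    · rw [h] at hc2
      have h3 : Commute (gen Γ u) ((gen Γ y)⁻¹ * gen Γ x * (gen Γ x)⁻¹) :=
        hc2.mul_right hc.inv_right
      rw [mul_assoc, mul_inv_cancel, mul_one] at h3
      simpa using h3.inv_right
  exact commute_gen Γ hcy

lemma y_mem_aSet {x y z : X} (hyx : y ≠ x)
    (hdom : ∀ u, Γ.Adj u x → u = y ∨ Γ.Adj u y)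
    (hxA : x ∈ aSet Γ {z}) : y ∈ aSet Γ {z} := by
  rw [mem_aSet_singleton] at hxA ⊢
  intro w hw
  rcases hxA w hw with heq | hadj
  · subst heq
    have hzx : Γ.Adj z x := hw.symm
    rcases hdom z hzx with rfl | hzy
    · exact Or.inr hzx
    · rcases hxA y hzy.symm with heq2 | hadj2
      · exact absurd heq2.symm hyx
      · exact Or.inr hadj2.symm
  · rcases hdom w hadj.symm with rfl | hwy
    · exact Or.inl rfl
    · exact Or.inr hwy.symm

lemma mem_comp_not_perp {x : X} {C : Set X} (hC : IsCompOf Γ ((perp Γ {x})ᶜ) C)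
    {u : X} (hu : u ∈ C) : u ∉ perp Γ {x} := by
  obtain ⟨K, rfl⟩ := hC
  obtain ⟨v, _, rfl⟩ := hu
  exact v.2

lemma comp_subset {x z : X} {C : Set X} (hC : IsCompOf Γ ((perp Γ {x})ᶜ) C)
    (hxA : x ∉ aSet Γ {z}) {a b : X} (ha : a ∈ C) (haA : a ∈ aSet Γ {z})
    (hbA : b ∈ aSet Γ {z}) (hbx : b ∉ perp Γ {x}) : b ∈ C := by
  have hax : a ∉ perp Γ {x} := mem_comp_not_perp Γ hC ha
  obtain ⟨K, rfl⟩ := hC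
  obtain ⟨a', ha', rfl⟩ := ha
  rw [mem_aSet_singleton] at hxA
  push_neg at hxA
  obtain ⟨l0, hl0z, hxne, hxnadj⟩ := hxA
  have hl0x : l0 ∈ ((perp Γ {x})ᶜ : Set X) := by
    intro hmem
    rw [mem_perp_singleton] at hmem
    rcases hmem with rfl | hadj
    · exact hxne rfl
    · exact hxnadj hadj.symm
  have hbS : b ∈ ((perp Γ {x})ᶜ : Set X) := hbx
  have hreach : (Γ.induce ((perp Γ {x})ᶜ : Set X)).Reachable a' ⟨b, hbS⟩ := by
    have haval : (a' : X) ∈ aSet Γ {z} := haA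
    rcases (mem_aSet_singleton Γ).mp haval l0 hl0z with heq1 | hadj1
    · rcases (mem_aSet_singleton Γ).mp hbA l0 hl0z with heq2 | hadj2
      · have : a' = (⟨b, hbS⟩ : ((perp Γ {x})ᶜ : Set X)) := Subtype.ext (show (a' : X) = b by rw [heq1, heq2])
        rw [this]
      · have hadj : Γ.Adj (a' : X) b := by rw [heq1]; exact hadj2.symm
        exact (SimpleGraph.Adj.reachable (by exact hadj :
          (Γ.induce ((perp Γ {x})ᶜ : Set X)).Adj a' ⟨b, hbS⟩))
    · rcases (mem_aSet_singleton Γ).mp hbA l0 hl0z with heq2 | hadj2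
      · have hadj : Γ.Adj (a' : X) b := by rw [heq2]; exact hadj1
        exact (SimpleGraph.Adj.reachable (by exact hadj :
          (Γ.induce ((perp Γ {x})ᶜ : Set X)).Adj a' ⟨b, hbS⟩))
      · have e1 : (Γ.induce ((perp Γ {x})ᶜ : Set X)).Adj a' ⟨l0, hl0x⟩ := hadj1
        have e2 : (Γ.induce ((perp Γ {x})ᶜ : Set X)).Adj ⟨l0, hl0x⟩ ⟨b, hbS⟩ := hadj2.symm
        exact e1.reachable.trans e2.reachable
  have hK : (Γ.induce ((perp Γ {x})ᶜ : Set X)).connectedComponentMk a' = K :=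
    (SimpleGraph.ConnectedComponent.mem_supp_iff _ _).mp ha'
  have : (⟨b, hbS⟩ : ((perp Γ {x})ᶜ : Set X)) ∈ K.supp := by
    rw [SimpleGraph.ConnectedComponent.mem_supp_iff _ _, ← hK]
    exact (SimpleGraph.ConnectedComponent.sound hreach.symm)
  exact ⟨⟨b, hbS⟩, this, rfl⟩

end Combinatorics

end PCG
namespace PCG

/-- Every element of `Aut*(G)` maps each `G(𝔞(x))` to a
conjugate of itself. -/
theorem autStar_maps_aSet_to_conjugate {X : Type*} [Fintype X] (Γ : SimpleGraph X)
    (φ : MulAut (RAAG Γ)) (h : φ ∈ AutStar Γ) :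
    ∀ x : X, ∃ f : RAAG Γ,
      Subgroup.map φ.toMonoidHom (parab Γ (aSet Γ {x})) =
        conjBy (parab Γ (aSet Γ {x})) f := by
  classical
  refine Subgroup.closure_induction
    (p := fun ψ _ => ∀ z : X, ∃ f : RAAG Γ,
      Subgroup.map ψ.toMonoidHom (parab Γ (aSet Γ {z})) =
        conjBy (parab Γ (aSet Γ {z})) f) ?_ ?_ ?_ ?_ h
  · -- generators
    rintro ψ hψ z
    rcases hψ with (hInv | hTr) | hLInn
    · -- inversion
      obtain ⟨x, hx, hfix⟩ := hInv
      refine ⟨1, ?_⟩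
      rw [conjBy_one]
      apply map_parab_self
      · intro u hu
        rcases eq_or_ne u x with rfl | hne
        · rw [hx]; exact inv_mem (gen_mem_parab Γ hu)
        · rw [hfix u hne]; exact gen_mem_parab Γ hu
      · intro u hu
        rcases eq_or_ne u x with rfl | hne
        · exact ⟨(gen Γ u)⁻¹, inv_mem (gen_mem_parab Γ hu), by rw [map_inv, hx, inv_inv]⟩
        · exact ⟨gen Γ u, gen_mem_parab Γ hu, hfix u hne⟩
    · -- transvection
      obtain ⟨x, y, hyx, hx, hfix⟩ := hTr
      refine ⟨1, ?_⟩
      rw [conjBy_one]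
      by_cases hxA : x ∈ aSet Γ {z}
      · have hdom : ∀ u, Γ.Adj u x → u = y ∨ Γ.Adj u y := fun u hu => tr_dom Γ hyx hx hfix hu
        have hyA : y ∈ aSet Γ {z} := y_mem_aSet Γ hyx hdom hxA
        apply map_parab_self
        · intro u hu
          rcases eq_or_ne u x with rfl | hne
          · rcases hx with h' | h'
            · rw [h']; exact mul_mem (gen_mem_parab Γ hu) (gen_mem_parab Γ hyA)
            · rw [h']; exact mul_mem (inv_mem (gen_mem_parab Γ hyA)) (gen_mem_parab Γ hu)
          · rw [hfix u hne]; exact gen_mem_parab Γ hu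
        · intro u hu
          rcases eq_or_ne u x with rfl | hne
          · rcases hx with h' | h'
            · refine ⟨gen Γ u * (gen Γ y)⁻¹,
                mul_mem (gen_mem_parab Γ hu) (inv_mem (gen_mem_parab Γ hyA)), ?_⟩
              rw [map_mul, map_inv, h', hfix y hyx]
              group
            · refine ⟨gen Γ y * gen Γ u,
                mul_mem (gen_mem_parab Γ hyA) (gen_mem_parab Γ hu), ?_⟩
              rw [map_mul, h', hfix y hyx]
              group
          · exact ⟨gen Γ u, gen_mem_parab Γ hu, hfix u hne⟩
      · apply map_parab_self
        · intro u hu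
          have hne : u ≠ x := fun he => hxA (he ▸ hu)
          rw [hfix u hne]; exact gen_mem_parab Γ hu
        · intro u hu
          have hne : u ≠ x := fun he => hxA (he ▸ hu)
          exact ⟨gen Γ u, gen_mem_parab Γ hu, hfix u hne⟩
    · -- elementary conjugating automorphism
      obtain ⟨x, C, ε, hε, hC, hconj, hfix⟩ := hLInn
      have hxC : x ∉ C := fun hxc =>
        mem_comp_not_perp Γ hC hxc ((mem_perp_singleton Γ).mpr (Or.inl rfl))
      by_cases hxA : x ∈ aSet Γ {z}
      · refine ⟨1, ?_⟩
        rw [conjBy_one]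
        have hxP : gen Γ x ∈ parab Γ (aSet Γ {z}) := gen_mem_parab Γ hxA
        apply map_parab_self
        · intro u hu
          by_cases huC : u ∈ C
          · rw [hconj u huC]
            exact mul_mem (mul_mem (inv_mem (zpow_mem hxP ε)) (gen_mem_parab Γ hu))
              (zpow_mem hxP ε)
          · rw [hfix u huC]; exact gen_mem_parab Γ hu
        · intro u hu
          by_cases huC : u ∈ C
          · refine ⟨gen Γ x ^ ε * gen Γ u * (gen Γ x ^ ε)⁻¹,
              mul_mem (mul_mem (zpow_mem hxP ε) (gen_mem_parab Γ hu))
                (inv_mem (zpow_mem hxP ε)), ?_⟩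
            rw [map_mul, map_mul, map_inv, map_zpow, hfix x hxC, hconj u huC]
            group
          · exact ⟨gen Γ u, gen_mem_parab Γ hu, hfix u huC⟩
      · by_cases hAC : ∃ a ∈ aSet Γ {z}, a ∈ C
        · obtain ⟨a, haA, haC⟩ := hAC
          refine ⟨gen Γ x ^ ε, ?_⟩
          apply map_parab_conj
          intro u hu
          by_cases huC : u ∈ C
          · exact hconj u huC
          · have hupx : u ∈ perp Γ {x} := by
              by_contra hupx
              exact huC (comp_subset Γ hC hxA haC haA hu hupx)
            rcases (mem_perp_singleton Γ).mp hupx with rfl | hadj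
            · exact absurd hu hxA
            · have hcomm : Commute (gen Γ u) (gen Γ x) := adj_commute Γ hadj
              have hcz : Commute (gen Γ u) (gen Γ x ^ ε) := hcomm.zpow_right ε
              rw [hfix u huC]
              exact (by rw [mul_assoc, hcz.eq, ← mul_assoc, inv_mul_cancel, one_mul] :
                (gen Γ x ^ ε)⁻¹ * gen Γ u * gen Γ x ^ ε = gen Γ u).symm
        · push_neg at hAC
          refine ⟨1, ?_⟩
          rw [conjBy_one]
          apply map_parab_self
          · intro u hu
            rw [hfix u (hAC u hu)]; exact gen_mem_parab Γ hu
          · intro u hu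
            exact ⟨gen Γ u, gen_mem_parab Γ hu, hfix u (hAC u hu)⟩
  · -- one
    intro z
    refine ⟨1, ?_⟩
    rw [conjBy_one]
    have : (1 : MulAut (RAAG Γ)).toMonoidHom = MonoidHom.id _ := by ext g; rfl
    rw [this, Subgroup.map_id]
  · -- mul
    intro ψ χ _ _ hψ hχ z
    obtain ⟨g, hg⟩ := hψ z
    obtain ⟨f, hf⟩ := hχ z
    refine ⟨g * ψ f, ?_⟩
    rw [map_mulAut_mul, hf, map_conjBy, hg, conjBy_conjBy]
  · -- inv
    intro ψ _ hψ z
    obtain ⟨g, hg⟩ := hψ z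
    have h1 := map_mulAut_inv_map ψ (parab Γ (aSet Γ {z}))
    rw [hg, map_conjBy] at h1
    refine ⟨(ψ⁻¹ g)⁻¹, ?_⟩
    have h2 := congrArg (fun H => conjBy H (ψ⁻¹ g)⁻¹) h1
    rw [conjBy_conjBy, mul_inv_cancel, conjBy_one] at h2
    exact h2

end PCG
end

section
/- Let Γ be a finite simple graph with vertex set X. For all distinct x, z ∈ X and all U ⊆ X: (i) cl({x}) = 𝔞(x) ∩ x^⊥, so 𝔞(x) = cl({x}) if and only if 𝔞(x) ⊆ x^⊥; (ii) x^⊥ ⊆ 𝔞(x) if and only if x^⊥ spans a complete subgraph of Γ; (iii) 𝔞(z) ⊆ 𝔞(x) if and only if x^⊥ \ {x} ⊆ z^⊥; (iv) 𝔞(x) = 𝔞(z) if and only if x^⊥ = z^⊥ or x^⊥ \ {x} = z^⊥ \ {z}; (v) if z ∈ 𝔞(x) then 𝔞(z) ⊆ 𝔞(x); (vi) 𝔞(U) = ⋃_{y ∈ 𝔞(U)} 𝔞(y); (vii) if cl({x}) = 𝔞(x) then cl({y}) = 𝔞(y) for all y ∈ 𝔞(x). -/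
namespace PCG

section Aux

variable {X : Type*} {Γ : SimpleGraph X}

lemma mem_perp_s {u x : X} : u ∈ perp Γ {x} ↔ u = x ∨ Γ.Adj u x := by
  simp [perp]

lemma mem_lk {w x : X} : w ∈ perp Γ {x} \ {x} ↔ Γ.Adj w x := by
  constructor
  · rintro ⟨h1, h2⟩
    rcases mem_perp_s.mp h1 with h | h
    · exact absurd h h2
    · exact h
  · intro h
    exact ⟨mem_perp_s.mpr (Or.inr h), h.ne⟩

lemma mem_aSet {u x : X} : u ∈ aSet Γ {x} ↔ ∀ w, Γ.Adj w x → u = w ∨ Γ.Adj u w := by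
  constructor
  · intro h w hw
    exact Set.mem_iInter₂.mp h x rfl w (mem_lk.mpr hw)
  · intro h
    refine Set.mem_iInter₂.mpr ?_
    rintro y rfl w hw
    exact h w (mem_lk.mp hw)

lemma mem_aSet' {z x : X} : z ∈ aSet Γ {x} ↔ ∀ w, Γ.Adj w x → w = z ∨ Γ.Adj w z := by
  rw [mem_aSet]
  constructor <;> intro h w hw <;> rcases h w hw with h1 | h1
  · exact Or.inl h1.symm
  · exact Or.inr h1.symm
  · exact Or.inl h1.symm
  · exact Or.inr h1.symm

lemma mem_cl {u x : X} : u ∈ cl Γ {x} ↔ ∀ w, (w = x ∨ Γ.Adj w x) → u = w ∨ Γ.Adj u w := by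
  constructor
  · intro h w hw; exact h w (mem_perp_s.mpr hw)
  · intro h w hw; exact h w (mem_perp_s.mp hw)

lemma self_mem_aSet {x : X} : x ∈ aSet Γ {x} :=
  mem_aSet.mpr fun _ hw => Or.inr hw.symm

lemma aSet_sub {x z : X} (h : ∀ w, Γ.Adj w x → w = z ∨ Γ.Adj w z) :
    aSet Γ {z} ⊆ aSet Γ {x} := by
  intro u hu
  rw [mem_aSet] at hu ⊢
  intro w hw
  rcases h w hw with rfl | hwz
  · rcases hu x hw.symm with rfl | hux
    · exact Or.inr hw.symm
    · exact h u hux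
  · exact hu w hwz

lemma aSet_sub_iff {x z : X} :
    aSet Γ {z} ⊆ aSet Γ {x} ↔ perp Γ {x} \ {x} ⊆ perp Γ {z} := by
  constructor
  · intro h w hw
    have hz : z ∈ aSet Γ {x} := h self_mem_aSet
    rcases mem_aSet'.mp hz w (mem_lk.mp hw) with h1 | h1
    · exact mem_perp_s.mpr (Or.inl h1)
    · exact mem_perp_s.mpr (Or.inr h1)
  · intro h
    refine aSet_sub fun w hw => ?_
    exact mem_perp_s.mp (h (mem_lk.mpr hw))

lemma cl_eq_inter (x : X) : cl Γ {x} = aSet Γ {x} ∩ perp Γ {x} := by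
  ext u
  simp only [Set.mem_inter_iff, mem_cl, mem_aSet, mem_perp_s]
  constructor
  · intro h
    exact ⟨fun w hw => h w (Or.inr hw), h x (Or.inl rfl)⟩
  · rintro ⟨h1, h2⟩ w (rfl | hw)
    · exact h2
    · exact h1 w hw

lemma aSet_eq_cl_iff (x : X) :
    aSet Γ {x} = cl Γ {x} ↔ aSet Γ {x} ⊆ perp Γ {x} := by
  rw [cl_eq_inter]
  constructor
  · intro h
    rw [h]; exact Set.inter_subset_right
  · intro h
    exact (Set.inter_eq_left.mpr h).symm

end Aux

/-- Basic properties of the operators `cl` and `𝔞`. -/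
theorem aSet_cl_properties {X : Type*} [Fintype X] (Γ : SimpleGraph X)
    (x z : X) (hxz : x ≠ z) (U : Set X) :
    (cl Γ {x} = aSet Γ {x} ∩ perp Γ {x} ∧
      (aSet Γ {x} = cl Γ {x} ↔ aSet Γ {x} ⊆ perp Γ {x})) ∧
    (perp Γ {x} ⊆ aSet Γ {x} ↔
      ∀ u ∈ perp Γ {x}, ∀ v ∈ perp Γ {x}, u ≠ v → Γ.Adj u v) ∧
    (aSet Γ {z} ⊆ aSet Γ {x} ↔ perp Γ {x} \ {x} ⊆ perp Γ {z}) ∧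
    (aSet Γ {x} = aSet Γ {z} ↔
      (perp Γ {x} = perp Γ {z} ∨ perp Γ {x} \ {x} = perp Γ {z} \ {z})) ∧
    (z ∈ aSet Γ {x} → aSet Γ {z} ⊆ aSet Γ {x}) ∧
    (aSet Γ U = ⋃ y ∈ aSet Γ U, aSet Γ {y}) ∧
    (cl Γ {x} = aSet Γ {x} → ∀ y ∈ aSet Γ {x}, cl Γ {y} = aSet Γ {y}) := by
  refine ⟨⟨cl_eq_inter x, aSet_eq_cl_iff x⟩, ?_, aSet_sub_iff, ?_, ?_, ?_, ?_⟩
  · -- (ii)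
    constructor
    · intro h u hu v hv hne
      rcases mem_perp_s.mp hv with rfl | hvx
      · rcases mem_perp_s.mp hu with rfl | hux
        · exact absurd rfl hne
        · exact hux
      · rcases mem_aSet.mp (h hu) v hvx with rfl | huv
        · exact absurd rfl hne
        · exact huv
    · intro h u hu
      refine mem_aSet.mpr fun w hw => ?_
      by_cases huw : u = w
      · exact Or.inl huw
      · exact Or.inr (h u hu w (mem_perp_s.mpr (Or.inr hw)) huw)
  · -- (iv)
    constructor
    · intro h
      have h1 : ∀ w, Γ.Adj w x → w = z ∨ Γ.Adj w z :=
        fun w hw => mem_aSet'.mp (h ▸ (self_mem_aSet : z ∈ aSet Γ {z})) w hw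
      have h2 : ∀ w, Γ.Adj w z → w = x ∨ Γ.Adj w x :=
        fun w hw => mem_aSet'.mp (h ▸ (self_mem_aSet : x ∈ aSet Γ {x})) w hw
      by_cases hadj : Γ.Adj x z
      · left
        ext u
        rw [mem_perp_s, mem_perp_s]
        constructor
        · rintro (rfl | hu)
          · exact Or.inr hadj
          · exact h1 u hu
        · rintro (rfl | hu)
          · exact Or.inr hadj.symm
          · exact h2 u hu
      · right
        ext u
        rw [mem_lk, mem_lk]
        constructor
        · intro hu
          rcases h1 u hu with rfl | h'
          · exact absurd hu.symm hadj
          · exact h'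
        · intro hu
          rcases h2 u hu with rfl | h'
          · exact absurd hu hadj
          · exact h'
    · rintro (h | h)
      · refine Set.Subset.antisymm (aSet_sub fun w hw => ?_) (aSet_sub fun w hw => ?_)
        · exact mem_perp_s.mp (h ▸ mem_perp_s.mpr (Or.inr hw))
        · exact mem_perp_s.mp (h.symm ▸ mem_perp_s.mpr (Or.inr hw))
      · refine Set.Subset.antisymm (aSet_sub fun w hw => ?_) (aSet_sub fun w hw => ?_)
        · exact Or.inr (mem_lk.mp (h ▸ mem_lk.mpr hw))
        · exact Or.inr (mem_lk.mp (h.symm ▸ mem_lk.mpr hw))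
  · -- (v)
    intro h
    exact aSet_sub (mem_aSet'.mp h)
  · -- (vi)
    have key : aSet Γ U = ⋂ w ∈ U, aSet Γ {w} := by
      simp [aSet]
    ext u
    simp only [Set.mem_iUnion]
    constructor
    · intro hu
      exact ⟨u, hu, self_mem_aSet⟩
    · rintro ⟨y, hy, hu⟩
      rw [key] at hy ⊢
      refine Set.mem_iInter₂.mpr fun w hw => ?_
      exact aSet_sub (mem_aSet'.mp (Set.mem_iInter₂.mp hy w hw)) hu
  · -- (vii)
    intro h y hy
    refine ((aSet_eq_cl_iff y).mpr ?_).symm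
    have hx : aSet Γ {x} ⊆ perp Γ {x} := (aSet_eq_cl_iff x).mp h.symm
    intro u hu
    have hyx : y ∈ perp Γ {x} := hx hy
    have hux : u ∈ perp Γ {x} := hx (aSet_sub (mem_aSet'.mp hy) hu)
    rcases mem_perp_s.mp hyx with rfl | hyx'
    · exact hux
    · rcases mem_perp_s.mp hux with rfl | hux'
      · exact mem_perp_s.mpr (Or.inr hyx'.symm)
      · rcases mem_aSet'.mp hy u hux' with rfl | h'
        · exact mem_perp_s.mpr (Or.inl rfl)
        · exact mem_perp_s.mpr (Or.inr h')

end PCG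
end

section
/- Let Γ be a finite simple graph with vertex set X and G = G(Γ). If x and z are adjacent vertices of Γ, then every element of G(𝔞(x)) commutes with every element of G(𝔞(z)); that is, [G(𝔞(x)), G(𝔞(z))] = 1. -/
namespace PCG

theorem gen_commute_of_adj {X : Type*} (Γ : SimpleGraph X) {a b : X} (h : Γ.Adj a b) :
    Commute (gen Γ a) (gen Γ b) := by
  have h1 : (QuotientGroup.mk (FreeGroup.of a * FreeGroup.of b * (FreeGroup.of a)⁻¹ *
      (FreeGroup.of b)⁻¹) : RAAG Γ) = 1 := by
    apply (QuotientGroup.eq_one_iff _).2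
    exact Subgroup.subset_normalClosure ⟨a, b, h, rfl⟩
  have h2 : gen Γ a * gen Γ b * (gen Γ a)⁻¹ * (gen Γ b)⁻¹ = 1 := by
    simp only [QuotientGroup.mk_mul, QuotientGroup.mk_inv] at h1
    exact h1
  have := mul_eq_one_iff_eq_inv.1 h2
  rw [Commute, SemiconjBy]
  group at this ⊢
  rw [eq_comm]
  calc gen Γ b * gen Γ a = (gen Γ a * gen Γ b * (gen Γ a)⁻¹ * (gen Γ b)⁻¹)⁻¹ *
        (gen Γ a * gen Γ b) := by group
    _ = gen Γ a * gen Γ b := by rw [h2]; group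

theorem aSet_adj_or_eq {X : Type*} (Γ : SimpleGraph X) {x z u v : X} (hadj : Γ.Adj x z)
    (hu : u ∈ aSet Γ {x}) (hv : v ∈ aSet Γ {z}) : u = v ∨ Γ.Adj u v := by
  simp only [aSet, Set.mem_iInter, Set.mem_singleton_iff, forall_eq] at hu hv
  have hu' : ∀ w, Γ.Adj w x → u = w ∨ Γ.Adj u w := by
    intro w hw
    exact hu w ⟨fun y hy => by rw [hy]; exact Or.inr hw, fun hwx => Γ.irrefl (hwx ▸ hw)⟩
  have hv' : ∀ w, Γ.Adj w z → v = w ∨ Γ.Adj v w := by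
    intro w hw
    exact hv w ⟨fun y hy => by rw [hy]; exact Or.inr hw, fun hwz => Γ.irrefl (hwz ▸ hw)⟩
  rcases hu' z hadj.symm with huz | huz
  · -- u = z
    rcases hv' x hadj with hvx | hvx
    · exact Or.inr (by rw [huz, hvx]; exact hadj.symm)
    · rcases hu' v hvx with h | h
      · exact Or.inl h
      · exact Or.inr h
  · rcases hv' u huz with h | h
    · exact Or.inl h.symm
    · exact Or.inr h.symm

/-- If `x` and `z` are adjacent then `[G(𝔞(x)), G(𝔞(z))] = 1`. -/
theorem parab_aSet_commute {X : Type*} [Fintype X] (Γ : SimpleGraph X)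
    (x z : X) (hadj : Γ.Adj x z) :
    ∀ g ∈ parab Γ (aSet Γ {x}), ∀ h ∈ parab Γ (aSet Γ {z}), Commute g h := by
  intro g hg h hh
  induction hg using Subgroup.closure_induction with
  | one => exact Commute.one_left h
  | mul a b _ _ ha hb => exact Commute.mul_left ha hb
  | inv a _ ha => exact Commute.inv_left ha
  | mem s hs =>
    obtain ⟨u, hu, rfl⟩ := hs
    induction hh using Subgroup.closure_induction with
    | one => exact Commute.one_right _
    | mul a b _ _ ha hb => exact Commute.mul_right ha hb
    | inv a _ ha => exact Commute.inv_right ha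
    | mem t ht =>
      obtain ⟨v, hv, rfl⟩ := ht
      rcases aSet_adj_or_eq Γ hadj hu hv with h | h
      · rw [h]
      · exact gen_commute_of_adj Γ h

end PCG
end

section
/- Let Γ be a finite simple graph with vertex set X, let x, y ∈ X, and let C be the vertex set of a connected component of the full subgraph of Γ on X \ y^⊥. If 𝔞(x) is not contained in C ∪ y^⊥ and 𝔞(x) ∩ C ≠ ∅, then y ∈ 𝔞(x). -/
namespace PCG

/-- If `C` is a component of `Γ_{y^⊥}`, `𝔞(x) ⊄ C ∪ y^⊥` and
`𝔞(x) ∩ C ≠ ∅`, then `y ∈ 𝔞(x)`. -/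
theorem mem_aSet_of_component {X : Type*} [Fintype X] (Γ : SimpleGraph X)
    (x y : X) (C : Set X) (hC : IsCompOf Γ ((perp Γ {y})ᶜ) C)
    (h1 : ¬ aSet Γ {x} ⊆ C ∪ perp Γ {y}) (h2 : (aSet Γ {x} ∩ C).Nonempty) :
    y ∈ aSet Γ {x} := by
  obtain ⟨K, rfl⟩ := hC
  set C : Set X := Subtype.val '' K.supp with hCdef
  set S : Set X := (perp Γ {y})ᶜ with hS
  -- C ⊆ S
  have hCS : C ⊆ S := by
    rintro _ ⟨⟨u, hu⟩, _, rfl⟩; exact hu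
  -- adjacency closure of C within S
  have hclosed : ∀ u v : X, u ∈ C → v ∈ S → Γ.Adj u v → v ∈ C := by
    rintro _ v ⟨⟨u, huS⟩, hK, rfl⟩ hv hadj
    refine ⟨⟨v, hv⟩, ?_, rfl⟩
    have : (Γ.induce S).Adj ⟨u, huS⟩ ⟨v, hv⟩ := by
      simpa [SimpleGraph.comap_adj] using hadj
    have : (Γ.induce S).connectedComponentMk ⟨v, hv⟩
        = (Γ.induce S).connectedComponentMk ⟨u, huS⟩ :=
      SimpleGraph.ConnectedComponent.sound this.symm.reachable
    exact (SimpleGraph.ConnectedComponent.mem_supp_iff _ _).mpr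
      (this.trans ((SimpleGraph.ConnectedComponent.mem_supp_iff _ _).mp hK))
  obtain ⟨a, haA, haC⟩ := h2
  rw [Set.not_subset] at h1
  obtain ⟨b, hbA, hbU⟩ := h1
  have hbC : b ∉ C := fun h => hbU (Or.inl h)
  have hbS : b ∈ S := fun h => hbU (Or.inr h)
  have haS : a ∈ S := hCS haC
  -- membership in aSet {x}
  have amem : ∀ u, u ∈ aSet Γ {x} ↔ ∀ z ∈ perp Γ {x} \ {x}, u = z ∨ Γ.Adj u z := by
    intro u; simp [aSet, perp]
  -- key: lk(x) ⊆ y^⊥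
  have key : ∀ z ∈ perp Γ {x} \ {x}, z ∈ perp Γ {y} := by
    intro z hz
    by_contra hzS
    have hzS : z ∈ S := hzS
    have ha' := (amem a).mp haA z hz
    have hb' := (amem b).mp hbA z hz
    rcases ha' with rfl | hadj
    · rcases hb' with rfl | hadj
      · exact hbC haC
      · exact hbC (hclosed a b haC hbS hadj.symm)
    · have hzC : z ∈ C := hclosed a z haC hzS hadj
      rcases hb' with rfl | hadj'
      · exact hbC hzC
      · exact hbC (hclosed z b hzC hbS hadj'.symm)
  rw [amem]
  intro z hz
  have := key z hz
  simp only [perp, Set.mem_setOf_eq, Set.mem_singleton_iff, forall_eq] at this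
  rcases this with rfl | hadj
  · exact Or.inl rfl
  · exact Or.inr hadj.symm

end PCG
end
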